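/- Let {α_k} be positive step sizes with α_k → 0 and Σ_k α_k = ∞, let T > 0, δ ∈ (0,1), K ∈ ℕ, and let {m_k} ⊂ ℕ be strictly increasing with δT ≤ Σ_{i=m_k}^{m_{k+1}−1} α_i ≤ T for all k ≥ K. Set γ_k := Σ_{i=0}^{k−1} α_i. Let g : (0,∞) → (0,∞) be differentiable on some interval [ι,∞) with g′(x) > 0 for all x ≥ ι. Then there exists N ∈ ℕ such that for all n ≥ N: (a) δTk ≤ γ_{m_{n+k}} − γ_{m_n} ≤ Tk for all k ∈ ℕ; and (b) for every ϑ ∈ (0,1), Σ_{k=n}^∞ g(γ_{m_k})^{−2ϑ} ≤ g(γ_{m_n})^{−2ϑ} + (δT)^{−1}·∫_{γ_{m_n}}^∞ g(t)^{−2ϑ} dt, where the sum and the integral are interpreted in [0,∞]. -/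

import Mathlib

open MeasureTheory Filter Real Set Topology
open scoped ENNReal NNReal

/-- Step size and error estimates over time windows. -/
theorem stmt13 (α : ℕ → ℝ) (hα : ∀ k, 0 < α k)
    (hα0 : Tendsto α atTop (nhds 0))
    (hdiv : Tendsto (fun N => ∑ k ∈ Finset.range N, α k) atTop atTop)
    (T δ : ℝ) (hT : 0 < T) (hδ : δ ∈ Set.Ioo (0 : ℝ) 1)
    (K : ℕ) (m : ℕ → ℕ) (hm : StrictMono m)
    (hwin : ∀ k ≥ K, δ * T ≤ ∑ i ∈ Finset.Ico (m k) (m (k + 1)), α i ∧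
      ∑ i ∈ Finset.Ico (m k) (m (k + 1)), α i ≤ T)
    (γ : ℕ → ℝ) (hγ : ∀ k, γ k = ∑ i ∈ Finset.range k, α i)
    (g : ℝ → ℝ) (hgpos : ∀ u : ℝ, 0 < u → 0 < g u)
    (ι : ℝ)
    (hg' : ∀ u ≥ ι, ∃ dv > (0 : ℝ), HasDerivWithinAt g dv (Set.Ici ι) u) :
    ∃ N : ℕ, ∀ n ≥ N,
      (∀ k : ℕ, δ * T * k ≤ γ (m (n + k)) - γ (m n) ∧ γ (m (n + k)) - γ (m n) ≤ T * k) ∧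
      ∀ ϑ : ℝ, ϑ ∈ Set.Ioo (0 : ℝ) 1 →
        (∑' k : ℕ, ENNReal.ofReal ((g (γ (m (n + k)))) ^ (-(2 * ϑ)))) ≤
          ENNReal.ofReal ((g (γ (m n))) ^ (-(2 * ϑ))) +
            ENNReal.ofReal (δ * T)⁻¹ *
              ∫⁻ u in Set.Ici (γ (m n)), ENNReal.ofReal ((g u) ^ (-(2 * ϑ))) := by
  obtain ⟨hδ0, hδ1⟩ := hδ
  have hδT : 0 < δ * T := mul_pos hδ0 hT
  -- the window sum equals a difference of γ's
  have hwinγ : ∀ j, γ (m (j + 1)) - γ (m j) = ∑ i ∈ Finset.Ico (m j) (m (j + 1)), α i := by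
    intro j
    rw [hγ, hγ, Finset.sum_Ico_eq_sub _ (hm (Nat.lt_succ_self j)).le]
  -- γ ∘ m → ∞
  have hcomp : Tendsto (fun n => γ (m n)) atTop atTop := by
    have : Tendsto (fun n => ∑ k ∈ Finset.range (m n), α k) atTop atTop :=
      hdiv.comp hm.tendsto_atTop
    exact this.congr fun n => (hγ (m n)).symm
  obtain ⟨N₀, hN₀⟩ := (tendsto_atTop.mp hcomp (max ι 1)).exists_forall_of_atTop
  -- monotonicity of g on [ι, ∞)
  have hcont : ContinuousOn g (Set.Ici ι) := fun x hx => by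
    obtain ⟨dv, _, hdv⟩ := hg' x hx
    exact hdv.continuousWithinAt
  have hgmono : StrictMonoOn g (Set.Ici ι) := by
    apply strictMonoOn_of_deriv_pos (convex_Ici ι) hcont
    intro x hx
    rw [interior_Ici] at hx
    obtain ⟨dv, hdv0, hdv⟩ := hg' x (le_of_lt hx)
    have hx' : Set.Ici ι ∈ nhds x := Ici_mem_nhds hx
    have := hdv.hasDerivAt hx'
    rw [this.deriv]; exact hdv0
  refine ⟨max K N₀, fun n hn => ?_⟩
  have hnK : K ≤ n := le_trans (le_max_left _ _) hn
  have hnN₀ : N₀ ≤ n := le_trans (le_max_right _ _) hn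
  -- part (a)
  have parta : ∀ k : ℕ, δ * T * k ≤ γ (m (n + k)) - γ (m n) ∧
      γ (m (n + k)) - γ (m n) ≤ T * k := by
    intro k
    induction k with
    | zero => simp
    | succ k ih =>
      have hw := hwin (n + k) (le_trans hnK (Nat.le_add_right n k))
      have heq : γ (m (n + (k + 1))) - γ (m (n + k)) =
          ∑ i ∈ Finset.Ico (m (n + k)) (m (n + k + 1)), α i := by
        rw [← hwinγ (n + k)]; ring_nf
      constructor
      · have : δ * T * k + δ * T ≤ (γ (m (n + k)) - γ (m n)) +
            (γ (m (n + (k + 1))) - γ (m (n + k))) := by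
          refine add_le_add ih.1 ?_
          rw [heq]; exact hw.1
        push_cast; linarith
      · have : (γ (m (n + k)) - γ (m n)) + (γ (m (n + (k + 1))) - γ (m (n + k)))
            ≤ T * k + T := by
          refine add_le_add ih.2 ?_
          rw [heq]; exact hw.2
        push_cast; linarith
  refine ⟨parta, ?_⟩
  intro ϑ hϑ
  set a : ℕ → ℝ := fun k => γ (m (n + k)) with ha
  have hstep : ∀ k, δ * T ≤ a (k + 1) - a k := by
    intro k
    have hw := hwin (n + k) (le_trans hnK (Nat.le_add_right n k))
    have heq : a (k + 1) - a k =
        ∑ i ∈ Finset.Ico (m (n + k)) (m (n + k + 1)), α i := by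
      simp only [ha, ← hwinγ (n + k)]; ring_nf
    rw [heq]; exact hw.1
  have hamono : Monotone a := monotone_nat_of_le_succ fun k => by
    have := hstep k; linarith
  have ha0 : max ι 1 ≤ a 0 := by
    simpa [ha] using hN₀ n hnN₀
  have haι : ∀ k, ι ≤ a k := fun k =>
    le_trans (le_trans (le_max_left _ _) ha0) (hamono (Nat.zero_le k))
  have hapos : ∀ k, 0 < a k := fun k =>
    lt_of_lt_of_le (lt_of_lt_of_le one_pos (le_trans (le_max_right _ _) ha0))
      (hamono (Nat.zero_le k))
  set f : ℝ → ℝ := fun u => g u ^ (-(2 * ϑ)) with hf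
  have hexp : -(2 * ϑ) ≤ 0 := by nlinarith [hϑ.1]
  -- f is antitone where g is positive and monotone
  have hanti : ∀ x y, a 0 ≤ x → x ≤ y → f y ≤ f x := by
    intro x y hx hxy
    have hxι : ι ≤ x := le_trans (le_trans (le_max_left _ _) ha0) hx
    have hx0 : (0:ℝ) < x := lt_of_lt_of_le
      (lt_of_lt_of_le one_pos (le_trans (le_max_right _ _) ha0)) hx
    have hgx : 0 < g x := hgpos x hx0
    have hgxy : g x ≤ g y := hgmono.monotoneOn hxι (le_trans hxι hxy) hxy
    exact Real.rpow_le_rpow_of_nonpos hgx hgxy hexp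
  -- per-term integral bound
  set c : ℝ≥0∞ := ENNReal.ofReal (δ * T) with hc
  have hc0 : c ≠ 0 := by simp [hc, hδT]
  have hctop : c ≠ ⊤ := ENNReal.ofReal_ne_top
  have hterm : ∀ k : ℕ, ENNReal.ofReal (f (a (k + 1))) ≤
      c⁻¹ * ∫⁻ u in Set.Ico (a k) (a (k + 1)), ENNReal.ofReal (f u) := by
    intro k
    have h1 : c * ENNReal.ofReal (f (a (k + 1))) ≤
        ∫⁻ u in Set.Ico (a k) (a (k + 1)), ENNReal.ofReal (f u) := by
      have h2 : ∫⁻ _ in Set.Ico (a k) (a (k + 1)),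
          ENNReal.ofReal (f (a (k + 1))) ≤
          ∫⁻ u in Set.Ico (a k) (a (k + 1)), ENNReal.ofReal (f u) := by
        apply lintegral_mono_ae
        rw [ae_restrict_iff' measurableSet_Ico]
        filter_upwards with u hu
        exact ENNReal.ofReal_le_ofReal
          (hanti u (a (k + 1)) (le_trans (hamono (Nat.zero_le k)) hu.1) hu.2.le)
      calc c * ENNReal.ofReal (f (a (k + 1)))
          ≤ ENNReal.ofReal (a (k + 1) - a k) * ENNReal.ofReal (f (a (k + 1))) := by
            exact mul_le_mul_left (ENNReal.ofReal_le_ofReal (hstep k)) _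
        _ = ∫⁻ _ in Set.Ico (a k) (a (k + 1)), ENNReal.ofReal (f (a (k + 1))) := by
            rw [setLIntegral_const, Real.volume_Ico, mul_comm]
        _ ≤ _ := h2
    calc ENNReal.ofReal (f (a (k + 1)))
        = c⁻¹ * (c * ENNReal.ofReal (f (a (k + 1)))) := by
          rw [← mul_assoc, ENNReal.inv_mul_cancel hc0 hctop, one_mul]
      _ ≤ c⁻¹ * ∫⁻ u in Set.Ico (a k) (a (k + 1)), ENNReal.ofReal (f u) :=
          mul_le_mul_right h1 _
  -- disjoint union of the Ico's
  have hdisj : Pairwise (Function.onFun Disjoint fun k : ℕ =>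
      Set.Ico (a k) (a (k + 1))) := by
    intro i j hij
    rcases hij.lt_or_gt with h | h
    · rw [Function.onFun, Set.Ico_disjoint_Ico]
      exact le_trans (min_le_left _ _)
        (le_trans (hamono (Nat.succ_le_of_lt h)) (le_max_right _ _))
    · rw [Function.onFun, Set.Ico_disjoint_Ico]
      exact le_trans (min_le_right _ _)
        (le_trans (hamono (Nat.succ_le_of_lt h)) (le_max_left _ _))
  have hsum : ∑' k : ℕ, ∫⁻ u in Set.Ico (a k) (a (k + 1)), ENNReal.ofReal (f u)
      ≤ ∫⁻ u in Set.Ici (a 0), ENNReal.ofReal (f u) := by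
    rw [← lintegral_iUnion (fun k => measurableSet_Ico) hdisj]
    apply lintegral_mono_set
    exact Set.iUnion_subset fun k => le_trans (Set.Ico_subset_Icc_self.trans
      Set.Icc_subset_Ici_self) (Set.Ici_subset_Ici.mpr (hamono (Nat.zero_le k)))
  -- put it together
  have hshift : (∑' k : ℕ, ENNReal.ofReal (f (a k))) =
      ENNReal.ofReal (f (a 0)) + ∑' k : ℕ, ENNReal.ofReal (f (a (k + 1))) :=
    tsum_eq_zero_add' ENNReal.summable
  have hcinv : c⁻¹ = ENNReal.ofReal (δ * T)⁻¹ := by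
    rw [hc, ← ENNReal.ofReal_inv_of_pos hδT]
  calc (∑' k : ℕ, ENNReal.ofReal (f (a k)))
      = ENNReal.ofReal (f (a 0)) + ∑' k : ℕ, ENNReal.ofReal (f (a (k + 1))) := hshift
    _ ≤ ENNReal.ofReal (f (a 0)) +
        ∑' k : ℕ, c⁻¹ * ∫⁻ u in Set.Ico (a k) (a (k + 1)), ENNReal.ofReal (f u) :=
        add_le_add_right (ENNReal.tsum_le_tsum hterm) _
    _ = ENNReal.ofReal (f (a 0)) +
        c⁻¹ * ∑' k : ℕ, ∫⁻ u in Set.Ico (a k) (a (k + 1)), ENNReal.ofReal (f u) := by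
        rw [ENNReal.tsum_mul_left]
    _ ≤ ENNReal.ofReal (f (a 0)) +
        c⁻¹ * ∫⁻ u in Set.Ici (a 0), ENNReal.ofReal (f u) :=
        add_le_add_right (mul_le_mul_right hsum _) _
    _ = _ := by
        simp only [ha, hf, hcinv, Nat.add_zero]
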